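/- Let Ξ ⊆ ℝ^d be nonempty and closed, g : Ξ × ℝⁿ → ℝ lower semicontinuous (jointly), and assume for each x ∈ ℝⁿ there are ε_x > 0, M_x < ∞ with |g(ξ,y)| ≤ M_x for all ξ ∈ Ξ and y ∈ B(x,ε_x). For β ≥ 1 and θ^ν ∈ (0,∞) → 0 define g^ν(ξ,x) = inf_{ζ∈Ξ} [ g(ζ,x) + (1/(β θ^ν))‖ξ − ζ‖₂^β ]. Then for every sequence ξ^ν → ξ in Ξ and every x^ν → x in ℝⁿ, liminf_ν g^ν(ξ^ν,x^ν) ≥ g(ξ,x). -/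
import Mathlib


open MeasureTheory Filter Topology Metric Set Pointwise

noncomputable section


/-- Proposition 3.4(c): lower epi-limit property of the epigraphical regularizations. -/
theorem env_liminf

    {d n : ℕ}
    (Ξ : Set (EuclideanSpace ℝ (Fin d))) (hΞne : Ξ.Nonempty) (hΞcl : IsClosed Ξ)
    (g : EuclideanSpace ℝ (Fin d) → EuclideanSpace ℝ (Fin n) → ℝ)
    (hglsc : LowerSemicontinuousOn
      (fun q : EuclideanSpace ℝ (Fin d) × EuclideanSpace ℝ (Fin n) => g q.1 q.2)
      (Ξ ×ˢ (univ : Set (EuclideanSpace ℝ (Fin n)))))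
    (εx Mx : EuclideanSpace ℝ (Fin n) → ℝ)
    (hεx : ∀ x, 0 < εx x)
    (hMx : ∀ x, ∀ ξ ∈ Ξ, ∀ y ∈ closedBall x (εx x), |g ξ y| ≤ Mx x)
    (β : ℝ) (hβ : 1 ≤ β)
    (θ : ℕ → ℝ) (hθ : ∀ ν, 0 < θ ν)
    (gs : ℕ → EuclideanSpace ℝ (Fin d) → EuclideanSpace ℝ (Fin n) → ℝ)
    (hgs : ∀ ν ξ x, gs ν ξ x =
      ⨅ ζ : Ξ, (g ζ x + (1 / (β * θ ν)) * ‖(ζ : EuclideanSpace ℝ (Fin d)) - ξ‖ ^ β))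

    (hθ0 : Tendsto θ atTop (𝓝 0)) :
    ∀ ξ ∈ Ξ, ∀ ξs : ℕ → EuclideanSpace ℝ (Fin d), (∀ ν, ξs ν ∈ Ξ) →
      Tendsto ξs atTop (𝓝 ξ) →
      ∀ (x : EuclideanSpace ℝ (Fin n)) (xs : ℕ → EuclideanSpace ℝ (Fin n)),
      Tendsto xs atTop (𝓝 x) →
      g ξ x ≤ liminf (fun ν => gs ν (ξs ν) (xs ν)) atTop := by
  intro ξ hξ ξs hξs hξconv x xs hxconv
  haveI : Nonempty Ξ := hΞne.to_subtype
  set M := Mx x with hMdef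
  have hM0 : 0 ≤ M :=
    le_trans (abs_nonneg _) (hMx x ξ hξ x (mem_closedBall_self (hεx x).le))
  have hβ0 : (0:ℝ) < β := lt_of_lt_of_le one_pos hβ
  have hc : ∀ ν, 0 < 1/(β * θ ν) := fun ν => one_div_pos.mpr (mul_pos hβ0 (hθ ν))
  have hE : ∀ᶠ ν in atTop, xs ν ∈ closedBall x (εx x) :=
    hxconv (closedBall_mem_nhds x (hεx x))
  -- lower bound for each term of the infimum
  have hterm_lb : ∀ ν, xs ν ∈ closedBall x (εx x) → ∀ ζ : Ξ,
      -M ≤ g ζ (xs ν) + (1/(β * θ ν)) * ‖(ζ : EuclideanSpace ℝ (Fin d)) - ξs ν‖ ^ β := by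
    intro ν hν ζ
    have h1 : -M ≤ g ζ (xs ν) := neg_le_of_abs_le (hMx x ζ ζ.2 (xs ν) hν)
    have h2 : 0 ≤ (1/(β * θ ν)) * ‖(ζ : EuclideanSpace ℝ (Fin d)) - ξs ν‖ ^ β := by
      apply mul_nonneg (hc ν).le (Real.rpow_nonneg (norm_nonneg _) β)
    linarith
  have hbdd : ∀ ν, xs ν ∈ closedBall x (εx x) → BddBelow (Set.range fun ζ : Ξ =>
      g ζ (xs ν) + (1/(β * θ ν)) * ‖(ζ : EuclideanSpace ℝ (Fin d)) - ξs ν‖ ^ β) := by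
    intro ν hν
    exact ⟨-M, by rintro _ ⟨ζ, rfl⟩; exact hterm_lb ν hν ζ⟩
  -- upper bound for gs
  have hub : ∀ ν, xs ν ∈ closedBall x (εx x) → gs ν (ξs ν) (xs ν) ≤ M := by
    intro ν hν
    rw [hgs]
    refine le_trans (ciInf_le (hbdd ν hν) ⟨ξs ν, hξs ν⟩) ?_
    have : ‖ξs ν - ξs ν‖ ^ β = 0 := by
      simp [Real.zero_rpow hβ0.ne']
    rw [this, mul_zero, add_zero]
    exact le_of_abs_le (hMx x (ξs ν) (hξs ν) (xs ν) hν)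
  -- choose near-minimizers
  have hch : ∀ ν, ∃ ζ : Ξ,
      g ζ (xs ν) + (1/(β * θ ν)) * ‖(ζ : EuclideanSpace ℝ (Fin d)) - ξs ν‖ ^ β
        < gs ν (ξs ν) (xs ν) + 1/(ν+1) := by
    intro ν
    apply exists_lt_of_ciInf_lt
    rw [← hgs]
    have : (0:ℝ) < 1/(ν+1) := by positivity
    linarith
  choose ζ hζ using hch
  -- penalty bound
  have hθβ : ∀ ν, 0 < β * θ ν := fun ν => mul_pos hβ0 (hθ ν)
  have hpen : ∀ᶠ ν in atTop, ‖(ζ ν : EuclideanSpace ℝ (Fin d)) - ξs ν‖ ^ β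
      ≤ (2*M + 1) * (β * θ ν) := by
    filter_upwards [hE] with ν hν
    have h1 : -M ≤ g (ζ ν) (xs ν) := neg_le_of_abs_le (hMx x (ζ ν) (ζ ν).2 (xs ν) hν)
    have h2 := hζ ν
    have h3 := hub ν hν
    have h4 : (1:ℝ)/(ν+1) ≤ 1 := by
      rw [div_le_one (by positivity)]; linarith [Nat.cast_nonneg (α := ℝ) ν]
    have h5 : (1/(β * θ ν)) * ‖(ζ ν : EuclideanSpace ℝ (Fin d)) - ξs ν‖ ^ β ≤ 2*M + 1 := by
      linarith
    rw [div_mul_eq_mul_div, one_mul, div_le_iff₀ (hθβ ν)] at h5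
    linarith
  -- convergence of the distance of near-minimizers to ξs
  have ha0 : Tendsto (fun ν => ((2*M + 1) * (β * θ ν)) ^ β⁻¹) atTop (𝓝 0) := by
    have h1 : Tendsto (fun ν => (2*M + 1) * (β * θ ν)) atTop (𝓝 0) := by
      have := (hθ0.const_mul β).const_mul (2*M + 1)
      simpa using this
    have h2 := h1.rpow_const (Or.inr (inv_nonneg.mpr hβ0.le))
    rwa [Real.zero_rpow (inv_ne_zero hβ0.ne')] at h2
  have hdist0 : Tendsto (fun ν => ‖(ζ ν : EuclideanSpace ℝ (Fin d)) - ξs ν‖) atTop (𝓝 0) := by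
    apply squeeze_zero' (Eventually.of_forall fun ν => norm_nonneg _) _ ha0
    filter_upwards [hpen] with ν hν
    have := Real.rpow_le_rpow (Real.rpow_nonneg (norm_nonneg _) β) hν
      (inv_nonneg.mpr hβ0.le)
    rwa [Real.rpow_rpow_inv (norm_nonneg _) hβ0.ne'] at this
  -- ζ ν → ξ
  have hζconv : Tendsto (fun ν => (ζ ν : EuclideanSpace ℝ (Fin d))) atTop (𝓝 ξ) := by
    rw [tendsto_iff_dist_tendsto_zero]
    apply squeeze_zero (fun ν => dist_nonneg)
      (g := fun ν => ‖(ζ ν : EuclideanSpace ℝ (Fin d)) - ξs ν‖ + dist (ξs ν) ξ)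
    · intro ν
      calc dist (ζ ν : EuclideanSpace ℝ (Fin d)) ξ
          ≤ dist (ζ ν : EuclideanSpace ℝ (Fin d)) (ξs ν) + dist (ξs ν) ξ := dist_triangle _ _ _
        _ = ‖(ζ ν : EuclideanSpace ℝ (Fin d)) - ξs ν‖ + dist (ξs ν) ξ := by rw [dist_eq_norm]
    · have := hdist0.add (tendsto_iff_dist_tendsto_zero.mp hξconv)
      simpa using this
  -- pair sequence tends to (ξ, x) within Ξ ×ˢ univ
  have hpair : Tendsto (fun ν => ((ζ ν : EuclideanSpace ℝ (Fin d)), xs ν)) atTop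
      (𝓝[Ξ ×ˢ (univ : Set (EuclideanSpace ℝ (Fin n)))] (ξ, x)) := by
    apply tendsto_nhdsWithin_of_tendsto_nhds_of_eventually_within
    · exact hζconv.prodMk_nhds hxconv
    · exact Eventually.of_forall fun ν => ⟨(ζ ν).2, mem_univ _⟩
  -- main estimate via lsc
  have key : ∀ c, c < g ξ x → c ≤ liminf (fun ν => gs ν (ξs ν) (xs ν)) atTop := by
    intro c hc'
    set y := (c + g ξ x)/2 with hy
    have hcy : c < y := by rw [hy]; linarith
    have hyg : y < g ξ x := by rw [hy]; linarith
    have hlsc := hglsc (ξ, x) ⟨hξ, mem_univ _⟩ y hyg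
    have hev : ∀ᶠ ν in atTop, y < g (ζ ν) (xs ν) := hpair.eventually hlsc
    have hδ : ∀ᶠ ν : ℕ in atTop, (1:ℝ)/(ν+1) < y - c := by
      have : Tendsto (fun ν : ℕ => (1:ℝ)/(ν+1)) atTop (𝓝 0) :=
        tendsto_one_div_add_atTop_nhds_zero_nat
      exact Filter.Tendsto.eventually_lt_const (by linarith) this
    have hfinal : ∀ᶠ ν in atTop, c ≤ gs ν (ξs ν) (xs ν) := by
      filter_upwards [hev, hδ] with ν h1 h2
      have h3 := hζ ν
      have h4 : 0 ≤ (1/(β * θ ν)) * ‖(ζ ν : EuclideanSpace ℝ (Fin d)) - ξs ν‖ ^ β :=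
        mul_nonneg (hc ν).le (Real.rpow_nonneg (norm_nonneg _) β)
      linarith
    refine le_liminf_of_le ?_ hfinal
    apply Filter.IsBoundedUnder.isCoboundedUnder_ge
    exact Filter.isBoundedUnder_of_eventually_le (a := M)
      (by filter_upwards [hE] with ν hν using hub ν hν)
  by_contra h
  push_neg at h
  have := key ((liminf (fun ν => gs ν (ξs ν) (xs ν)) atTop + g ξ x)/2) (by linarith)
  linarith


end
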